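/- For the data of Construction 2, the total branch class satisfies Σ_{σ ≠ 0} D_σ = −3K + e_4 in ℤ⁵; consequently the class 2K + Σ_{σ ≠ 0} D_σ (representing 2K_X up to pull-back) equals e_4 − K = 3l − e_1 − e_2 − e_3, its self-intersection is (2K + Σ_{σ≠0} D_σ)·(2K + Σ_{σ≠0} D_σ) = 6, and hence 4·(2K + Σ_{σ≠0} D_σ)² = 24 (the value of K_X² for the covering surface X). -/

import Mathlib

open Finset

namespace DP5

/-- The Picard lattice of the del Pezzo surface `Y₄` of degree 5,
modeled as `ℤ⁵` with basis `l, e₁, e₂, e₃, e₄`. -/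
abbrev Pic : Type := Fin 5 → ℤ

def l  : Pic := ![1, 0, 0, 0, 0]
def e1 : Pic := ![0, 1, 0, 0, 0]
def e2 : Pic := ![0, 0, 1, 0, 0]
def e3 : Pic := ![0, 0, 0, 1, 0]
def e4 : Pic := ![0, 0, 0, 0, 1]

/-- The intersection form: `l·l = 1`, `eᵢ·eᵢ = -1`, mixed products `0`. -/
def inter (v w : Pic) : ℤ :=
  v 0 * w 0 - v 1 * w 1 - v 2 * w 2 - v 3 * w 3 - v 4 * w 4

def f1 : Pic := l - e1
def f2 : Pic := l - e2
def f3 : Pic := l - e3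
def f4 : Pic := l - e4

def h12 : Pic := l - e1 - e2
def h13 : Pic := l - e1 - e3
def h14 : Pic := l - e1 - e4
def h23 : Pic := l - e2 - e3
def h24 : Pic := l - e2 - e4
def h34 : Pic := l - e3 - e4

/-- The canonical class `K = -3l + e₁ + e₂ + e₃ + e₄` of `Y₄`. -/
def K : Pic := (-3 : ℤ) • l + e1 + e2 + e3 + e4

/-- Elements/characters of `(ℤ/2ℤ)⁴`, written as bit strings `σ₁σ₂σ₃σ₄`. -/
abbrev Char4 : Type := Fin 4 → ZMod 2

/-- Construction 2: the branch divisor classes `D_σ`. -/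
def D2 (s : Char4) : Pic :=
  if s = ![0,0,1,1] then e4 else
  if s = ![0,1,0,1] then h14 else
  if s = ![0,1,1,0] then f2 else
  if s = ![0,1,1,1] then f3 else
  if s = ![1,0,0,0] then e2 else
  if s = ![1,0,0,1] then h23 else
  if s = ![1,0,1,0] then h24 else
  if s = ![1,0,1,1] then f1 else
  if s = ![1,1,0,0] then h34 else
  if s = ![1,1,0,1] then h12 + h13 else
  if s = ![1,1,1,0] then e1 else
  if s = ![1,1,1,1] then e3 else 0

/-- Construction 2: the total branch class `B = Σ_{σ ≠ 0} D_σ`. -/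
def B2 : Pic := ∑ s ∈ Finset.univ.filter (fun s : Char4 => s ≠ 0), D2 s

/-- Construction 2: the total branch class is `-3K + e₄`, hence
`2K + B = e₄ - K = 3l - e₁ - e₂ - e₃`, with self-intersection `6`,
so that `K_X² = 4 · 6 = 24`. -/
theorem construction2_KX_squared :
    B2 = -((3 : ℤ) • K) + e4 ∧
    (2 : ℤ) • K + B2 = e4 - K ∧
    (2 : ℤ) • K + B2 = (3 : ℤ) • l - e1 - e2 - e3 ∧
    inter ((2 : ℤ) • K + B2) ((2 : ℤ) • K + B2) = 6 ∧
    4 * inter ((2 : ℤ) • K + B2) ((2 : ℤ) • K + B2) = 24 := by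
  have hB : B2 = ![9, -3, -3, -3, -2] := by decide
  refine ⟨?_, ?_, ?_, ?_, ?_⟩ <;>
    simp only [hB, K, l, e1, e2, e3, e4, inter] <;>
    first
      | (funext i; fin_cases i <;> norm_num [Matrix.cons_val_zero, Matrix.cons_val_one])
      | decide
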